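/- (Characterization of Hecke eigenforms, Corollary 5.5) Suppose Γ ≤ GL₂(A) contains Γ(𝔫) for some nonzero ideal 𝔫 ⊆ A. Let η ∈ GL₂(F), let γ₁,…,γ_r be a system of representatives of Γ\ΓηΓ, and let f : Ω → L be quasi-modular of weight k, type m and depth ≤ ℓ for Γ with coefficient family (f₀,…,f_ℓ). Let λ ∈ L. With T_η(f) := (det η)^{k−m} Σ_j f ∥_{k,m} γ_j and T_η(f_i) := (det η)^{(k−2i)−(m−i)} Σ_j f_i ∥_{k−2i,m−i} γ_j (where f_i carries the coefficient family ((h+i choose i)·f_{h+i})_h), the following are equivalent: (1) T_η(f) = λ·f; (2) T_η(f_i) = λ·(det η)^{−i}·f_i for every 0 ≤ i ≤ ℓ. -/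

import Mathlib

noncomputable section

namespace DrinfeldQM

variable {L : Type*} [Field L]

/-- Entry `(i,j)` of `γ ∈ GL₂(F)`, viewed inside `L`. -/
def Mc (F : Subfield L) (γ : GL (Fin 2) F) (i j : Fin 2) : L :=
  ((γ : Matrix (Fin 2) (Fin 2) F) i j : L)

/-- Determinant of `γ ∈ GL₂(F)`, viewed inside `L`. -/
def detL (F : Subfield L) (γ : GL (Fin 2) F) : L :=
  ((γ : Matrix (Fin 2) (Fin 2) F).det : L)

/-- Automorphy factor `cz + d`. -/
def jf (F : Subfield L) (γ : GL (Fin 2) F) (z : L) : L :=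
  Mc F γ 1 0 * z + Mc F γ 1 1

/-- Fractional linear action of `GL₂(F)` on `L` (restricting to `Ω`). -/
def act (F : Subfield L) (γ : GL (Fin 2) F) (z : L) : L :=
  (Mc F γ 0 0 * z + Mc F γ 0 1) / jf F γ z

/-- The Drinfeld upper half plane `Ω = L ∖ F`. -/
def Omega (F : Subfield L) : Set L := {z | z ∉ F}

/-- The slash operator `f |_{k,m} γ` of weight `k` and type `m`. -/
def slash (F : Subfield L) (k m : ℤ) (f : L → L) (γ : GL (Fin 2) F) : L → L :=
  fun z => detL F γ ^ m * jf F γ z ^ (-k) * f (act F γ z)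

/-- `f` is quasi-modular of weight `k`, type `m` and depth `≤ ℓ` for the set `S ⊆ GL₂(F)`
with coefficient family `fam` (only the indices `0,…,ℓ` of `fam` are relevant). -/
def IsQM (F : Subfield L) (S : Set (GL (Fin 2) F)) (k m : ℤ) (ℓ : ℕ)
    (f : L → L) (fam : ℕ → L → L) : Prop :=
  Set.EqOn (fam 0) f (Omega F) ∧
    ∀ γ ∈ S, ∀ z ∈ Omega F,
      slash F k m f γ z =
        ∑ i ∈ Finset.range (ℓ + 1), fam i z * (Mc F γ 1 0 / jf F γ z) ^ i

/-- The coefficient family of the `i`-th coefficient `f_i` of a quasi-modular function with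
coefficient family `fam`:  `(f_i)_h = ((h+i) choose i) · f_{h+i}`. -/
def shiftFam (i : ℕ) (fam : ℕ → L → L) : ℕ → L → L :=
  fun h z => ((h + i).choose i : L) * fam (h + i) z

/-- The double-slash operator `f ∥_{k,m} γ` of a quasi-modular function of depth `≤ ℓ` with
coefficient family `fam`. -/
def dslash (F : Subfield L) (k m : ℤ) (ℓ : ℕ) (fam : ℕ → L → L)
    (γ : GL (Fin 2) F) : L → L :=
  fun z => ∑ i ∈ Finset.range (ℓ + 1),
    (-(Mc F γ 1 0) / jf F γ z) ^ i * detL F γ ^ (m - (i : ℤ)) *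
      jf F γ z ^ (2 * (i : ℤ) - k) * fam i (act F γ z)

/-- The double-slash operator on polynomial-valued functions `P : Ω → L[X]`:
`(P ∥_{k,m} γ)(z, X) = (det γ)^m (cz+d)^{-k} P(γ·z, ((cz+d)²/det γ)(X - c/(cz+d)))`. -/
def pdslash (F : Subfield L) (k m : ℤ) (P : L → Polynomial L)
    (γ : GL (Fin 2) F) : L → Polynomial L :=
  fun z =>
    Polynomial.C (detL F γ ^ m * jf F γ z ^ (-k)) *
      (P (act F γ z)).comp
        (Polynomial.C (jf F γ z ^ 2 / detL F γ) *
          (Polynomial.X - Polynomial.C (Mc F γ 1 0 / jf F γ z)))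

/-- The associated polynomial `P_f(z, X) = ∑_{i=0}^{ℓ} f_i(z) Xⁱ`. -/
def assocPoly (ℓ : ℕ) (fam : ℕ → L → L) : L → Polynomial L :=
  fun z => ∑ i ∈ Finset.range (ℓ + 1), Polynomial.C (fam i z) * Polynomial.X ^ i

/-- `E` satisfies the functional equation of the false Eisenstein series (weight 2, type 1,
depth 1, coefficient family `(E, -π⁻¹)`) for all `γ ∈ S`. -/
def EFunEq (F : Subfield L) (S : Set (GL (Fin 2) F)) (π : L) (E : L → L) : Prop :=
  ∀ γ ∈ S, ∀ z ∈ Omega F,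
    E (act F γ z) =
      (detL F γ)⁻¹ * jf F γ z ^ 2 * (E z - Mc F γ 1 0 / (π * jf F γ z))

variable {Fq : Type*} [Field Fq] [Fintype Fq]

/-- The image in `L` of a polynomial `r ∈ A = Fq[T]` under `A → F ⊆ L`. -/
def iL (F : Subfield L) (ι : Polynomial Fq →+* F) (r : Polynomial Fq) : L := (ι r : L)

/-- `γ ∈ GL₂(F)` lies in `Γ₀(𝔞) ⊆ GL₂(A)`: its entries come from a matrix `M` over
`A = Fq[T]` with unit determinant whose lower-left entry lies in `𝔞`.
Taking `𝔞 = ⊤` expresses membership in `GL₂(A)`. -/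
def InGamma0 (F : Subfield L) (ι : Polynomial Fq →+* F)
    (𝔞 : Ideal (Polynomial Fq)) (γ : GL (Fin 2) F) : Prop :=
  ∃ M : Matrix (Fin 2) (Fin 2) (Polynomial Fq),
    (∀ i j, iL F ι (M i j) = Mc F γ i j) ∧ IsUnit M.det ∧ M 1 0 ∈ 𝔞

/-- `γ ∈ GL₂(F)` lies in the principal congruence subgroup `Γ(𝔫) ⊆ GL₂(A)`. -/
def InGammaN (F : Subfield L) (ι : Polynomial Fq →+* F)
    (𝔫 : Ideal (Polynomial Fq)) (γ : GL (Fin 2) F) : Prop :=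
  ∃ M : Matrix (Fin 2) (Fin 2) (Polynomial Fq),
    (∀ i j, iL F ι (M i j) = Mc F γ i j) ∧ IsUnit M.det ∧
      ∀ i j, M i j - (1 : Matrix (Fin 2) (Fin 2) (Polynomial Fq)) i j ∈ 𝔫

/-- `g` is modular of weight `w` and type `t` for `Γ₀(𝔞)`. -/
def IsModularOn (F : Subfield L) (ι : Polynomial Fq →+* F)
    (𝔞 : Ideal (Polynomial Fq)) (w t : ℤ) (g : L → L) : Prop :=
  ∀ γ : GL (Fin 2) F, InGamma0 F ι 𝔞 γ → ∀ z ∈ Omega F, slash F w t g γ z = g z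

/-- The degeneracy map `(δ_𝔭 g)(z) = g(℘ z)`. -/
def deltaP (F : Subfield L) (ι : Polynomial Fq →+* F) (℘ : Polynomial Fq)
    (g : L → L) : L → L := fun z => g (iL F ι ℘ * z)

/-- The Atkin–Lehner operator `(U_𝔭 g)(z) = ∑_{Q ∈ A, deg Q < deg ℘} g((z+Q)/℘)`,
where `Q = ∑ᵢ cᵢ Tⁱ` ranges over polynomials of degree `< deg ℘`. -/
def UP (F : Subfield L) (ι : Polynomial Fq →+* F) (℘ : Polynomial Fq)
    (g : L → L) : L → L :=
  fun z => ∑ c : Fin ℘.natDegree → Fq,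
    g ((z + iL F ι (∑ i : Fin ℘.natDegree, Polynomial.C (c i) * Polynomial.X ^ (i : ℕ))) /
      iL F ι ℘)

/-- The `𝔭`-stabilization `E_𝔭 = E - ℘·δ_𝔭E`. -/
def Ep (F : Subfield L) (ι : Polynomial Fq →+* F) (℘ : Polynomial Fq)
    (E : L → L) : L → L := fun z => E z - iL F ι ℘ * deltaP F ι ℘ E z

set_option linter.unusedSectionVars false
set_option linter.unusedVariables false

section AuxLemmas

variable {L : Type*} [Field L] (F : Subfield L)

lemma mc_mem (γ : GL (Fin 2) F) (i j : Fin 2) : Mc F γ i j ∈ F := by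
  exact SetLike.coe_mem _

lemma detL_eq (γ : GL (Fin 2) F) :
    detL F γ = Mc F γ 0 0 * Mc F γ 1 1 - Mc F γ 0 1 * Mc F γ 1 0 := by
  simp [detL, Mc, Matrix.det_fin_two]

lemma detL_mul (γ1 γ2 : GL (Fin 2) F) : detL F (γ1 * γ2) = detL F γ1 * detL F γ2 := by
  simp [detL, Units.val_mul, Matrix.det_mul]

lemma detL_one : detL F 1 = 1 := by simp [detL]

lemma detL_ne_zero (γ : GL (Fin 2) F) : detL F γ ≠ 0 := by
  have h : detL F γ * detL F γ⁻¹ = 1 := by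
    rw [← detL_mul, mul_inv_cancel, detL_one]
  exact left_ne_zero_of_mul_eq_one h

lemma Mc_mul (γ1 γ2 : GL (Fin 2) F) (i j : Fin 2) :
    Mc F (γ1 * γ2) i j = Mc F γ1 i 0 * Mc F γ2 0 j + Mc F γ1 i 1 * Mc F γ2 1 j := by
  simp [Mc, Units.val_mul, Matrix.mul_apply, Fin.sum_univ_two]

lemma jf_ne_zero (γ : GL (Fin 2) F) {z : L} (hz : z ∈ Omega F) : jf F γ z ≠ 0 := by
  intro h
  by_cases hc : Mc F γ 1 0 = 0
  · have hd : Mc F γ 1 1 = 0 := by simpa [jf, hc] using h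
    exact detL_ne_zero F γ (by rw [detL_eq, hc, hd]; ring)
  · apply hz
    rw [jf] at h
    have hzz : z = (- Mc F γ 1 1) / Mc F γ 1 0 := by
      rw [eq_div_iff hc]
      linear_combination h
    rw [hzz]
    exact F.div_mem (F.neg_mem (mc_mem F γ 1 1)) (mc_mem F γ 1 0)

lemma act_mem (γ : GL (Fin 2) F) {z : L} (hz : z ∈ Omega F) : act F γ z ∈ Omega F := by
  intro hw
  set w := act F γ z with hwdef
  have hj := jf_ne_zero F γ hz
  have hnum : Mc F γ 0 0 * z + Mc F γ 0 1 = w * jf F γ z := by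
    rw [hwdef, act, div_mul_cancel₀ _ hj]
  rw [jf] at hnum
  by_cases hac : Mc F γ 0 0 - w * Mc F γ 1 0 = 0
  · have hb : Mc F γ 0 1 - w * Mc F γ 1 1 = 0 := by linear_combination hnum - z * hac
    apply detL_ne_zero F γ
    rw [detL_eq]
    linear_combination Mc F γ 1 1 * hac - Mc F γ 1 0 * hb
  · apply hz
    have hzz : z = (w * Mc F γ 1 1 - Mc F γ 0 1) / (Mc F γ 0 0 - w * Mc F γ 1 0) := by
      rw [eq_div_iff hac]
      linear_combination hnum
    rw [hzz]
    exact F.div_mem (F.sub_mem (F.mul_mem hw (mc_mem F γ 1 1)) (mc_mem F γ 0 1))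
      (F.sub_mem (mc_mem F γ 0 0) (F.mul_mem hw (mc_mem F γ 1 0)))

lemma jf_mul (γ1 γ2 : GL (Fin 2) F) {z : L} (hz : z ∈ Omega F) :
    jf F (γ1 * γ2) z = jf F γ1 (act F γ2 z) * jf F γ2 z := by
  have h2 := jf_ne_zero F γ2 hz
  rw [jf, jf, act, Mc_mul, Mc_mul]
  simp only [jf] at h2 ⊢
  field_simp
  ring

lemma act_mul (γ1 γ2 : GL (Fin 2) F) {z : L} (hz : z ∈ Omega F) :
    act F (γ1 * γ2) z = act F γ1 (act F γ2 z) := by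
  have h2 := jf_ne_zero F γ2 hz
  have h1 := jf_ne_zero F γ1 (act_mem F γ2 hz)
  have h12 := jf_ne_zero F (γ1 * γ2) hz
  rw [act, act, jf_mul F γ1 γ2 hz,
    div_eq_div_iff (mul_ne_zero h1 h2) h1, Mc_mul, Mc_mul, jf, act]
  simp only [jf] at h2 ⊢
  field_simp
  ring

open Polynomial

lemma pdslash_apply (k m : ℤ) (P : L → Polynomial L) (γ : GL (Fin 2) F) (z : L) :
    pdslash F k m P γ z = C (detL F γ ^ m * jf F γ z ^ (-k)) *
      (P (act F γ z)).comp
        (C (jf F γ z ^ 2 / detL F γ) * X +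
          C (-(jf F γ z ^ 2 / detL F γ * (Mc F γ 1 0 / jf F γ z)))) := by
  rw [pdslash]
  congr 1
  rw [mul_sub, ← C_mul, sub_eq_add_neg, ← C_neg]

lemma cocycle_scalar (J1 J2 D1 D2 c1 c2 C12 : L) (hJ1 : J1 ≠ 0) (hJ2 : J2 ≠ 0)
    (hD1 : D1 ≠ 0) (hD2 : D2 ≠ 0)
    (hkey : C12 * J2 = c2 * (J1 * J2) + c1 * D2) :
    -((J1 * J2) ^ 2 / (D1 * D2) * (C12 / (J1 * J2))) =
      J1 ^ 2 / D1 * -(J2 ^ 2 / D2 * (c2 / J2)) + -(J1 ^ 2 / D1 * (c1 / J1)) := by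
  have hC : C12 = (c2 * (J1 * J2) + c1 * D2) / J2 := by rw [eq_div_iff hJ2]; exact hkey
  rw [hC]
  field_simp
  ring

lemma pdslash_mul (k m : ℤ) (P : L → Polynomial L) (γ1 γ2 : GL (Fin 2) F) {z : L}
    (hz : z ∈ Omega F) :
    pdslash F k m P (γ1 * γ2) z = pdslash F k m (pdslash F k m P γ1) γ2 z := by
  have h2 := jf_ne_zero F γ2 hz
  have h1 := jf_ne_zero F γ1 (act_mem F γ2 hz)
  have h12 := jf_ne_zero F (γ1 * γ2) hz
  have hd1 := detL_ne_zero F γ1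
  have hd2 := detL_ne_zero F γ2
  rw [pdslash_apply, pdslash_apply, pdslash_apply, act_mul F γ1 γ2 hz]
  rw [mul_comp, C_comp, comp_assoc]
  rw [mul_comm (C (detL F γ2 ^ m * jf F γ2 z ^ (-k))) _, mul_assoc]
  rw [mul_comm _ (C (detL F γ2 ^ m * jf F γ2 z ^ (-k))), ← mul_assoc, ← C_mul]
  congr 1
  · congr 1
    rw [detL_mul, jf_mul F γ1 γ2 hz, mul_zpow, mul_zpow]
    ring
  · congr 1
    rw [add_comp, mul_comp, C_comp, X_comp, C_comp]
    rw [mul_add, ← mul_assoc, ← C_mul, ← C_mul, add_assoc, ← C_add]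
    congr 1
    · congr 1
      rw [detL_mul, jf_mul F γ1 γ2 hz]
      field_simp
    · congr 1
      have hkey : Mc F (γ1 * γ2) 1 0 * jf F γ2 z =
          Mc F γ2 1 0 * (jf F γ1 (act F γ2 z) * jf F γ2 z) + Mc F γ1 1 0 * detL F γ2 := by
        have h2' : Mc F γ2 1 0 * z + Mc F γ2 1 1 ≠ 0 := by rw [jf] at h2; exact h2
        have eJJ : jf F γ1 (act F γ2 z) * jf F γ2 z =
            Mc F γ1 1 0 * (Mc F γ2 0 0 * z + Mc F γ2 0 1) +
              Mc F γ1 1 1 * (Mc F γ2 1 0 * z + Mc F γ2 1 1) := by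
          rw [jf, act, jf]
          rw [add_mul, mul_assoc, div_mul_cancel₀ _ h2']
        rw [Mc_mul, detL_eq, eJJ, jf]
        ring
      rw [detL_mul, jf_mul F γ1 γ2 hz]
      exact cocycle_scalar _ _ _ _ _ _ _ h1 h2 hd1 hd2 hkey

variable {Fq : Type*} [Field Fq] [Fintype Fq]

def Umat (F : Subfield L) (ι : Polynomial Fq →+* F) (n : Polynomial Fq) : GL (Fin 2) F where
  val := !![1, 0; ι n, 1]
  inv := !![1, 0; -ι n, 1]
  val_inv := by
    ext i j
    fin_cases i <;> fin_cases j <;>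
      simp [Matrix.mul_apply, Fin.sum_univ_two]
  inv_val := by
    ext i j
    fin_cases i <;> fin_cases j <;>
      simp [Matrix.mul_apply, Fin.sum_univ_two]

variable (ι : Polynomial Fq →+* F)

lemma Umat_00 (n : Polynomial Fq) : Mc F (Umat F ι n) 0 0 = 1 := by
  simp [Mc, Umat]
lemma Umat_01 (n : Polynomial Fq) : Mc F (Umat F ι n) 0 1 = 0 := by
  simp [Mc, Umat]
lemma Umat_10 (n : Polynomial Fq) : Mc F (Umat F ι n) 1 0 = iL F ι n := by
  simp [Mc, Umat, iL]
lemma Umat_11 (n : Polynomial Fq) : Mc F (Umat F ι n) 1 1 = 1 := by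
  simp [Mc, Umat]

lemma Umat_det (n : Polynomial Fq) : detL F (Umat F ι n) = 1 := by
  rw [detL_eq, Umat_00, Umat_01, Umat_11]
  ring

lemma Umat_inGammaN (𝔫 : Ideal (Polynomial Fq)) {n : Polynomial Fq} (hn : n ∈ 𝔫) :
    InGammaN F ι 𝔫 (Umat F ι n) := by
  refine ⟨!![1, 0; n, 1], ?_, ?_, ?_⟩
  · intro i j
    fin_cases i <;> fin_cases j <;>
      simp [iL, Umat_00, Umat_01, Umat_10, Umat_11, Mc, Umat]
  · rw [Matrix.det_fin_two_of]
    simp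
  · intro i j
    fin_cases i <;> fin_cases j <;>
      simp [Matrix.one_apply, hn]

lemma tval_inj (hι : Function.Injective ι) (γ : GL (Fin 2) F) {z : L} (hz : z ∈ Omega F) :
    Function.Injective
      (fun n : Polynomial Fq =>
        Mc F (Umat F ι n * γ) 1 0 / jf F (Umat F ι n * γ) z) := by
  intro n1 n2 h
  have h1 := jf_ne_zero F (Umat F ι n1 * γ) hz
  have h2 := jf_ne_zero F (Umat F ι n2 * γ) hz
  simp only [div_eq_div_iff h1 h2] at h
  rw [jf, jf, Mc_mul, Mc_mul, Mc_mul, Mc_mul, Umat_10, Umat_11] at h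
  rw [Umat_10, Umat_11] at h
  have hdet := detL_ne_zero F γ
  rw [detL_eq] at hdet
  have hx : iL F ι n1 = iL F ι n2 := by
    have hfactor : (iL F ι n1 - iL F ι n2) *
        (Mc F γ 0 0 * Mc F γ 1 1 - Mc F γ 0 1 * Mc F γ 1 0) = 0 := by
      linear_combination h
    rcases mul_eq_zero.1 hfactor with h0 | h0
    · exact sub_eq_zero.1 h0
    · exact absurd h0 hdet
  rw [iL, iL] at hx
  exact hι (Subtype.coe_injective hx)

lemma poly_zero_of_roots (hι : Function.Injective ι) {𝔫 : Ideal (Polynomial Fq)}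
    (h𝔫 : 𝔫 ≠ ⊥) (γ : GL (Fin 2) F) {z : L} (hz : z ∈ Omega F) {D : Polynomial L}
    (h : ∀ n ∈ 𝔫, D.IsRoot (Mc F (Umat F ι n * γ) 1 0 / jf F (Umat F ι n * γ) z)) :
    D = 0 := by
  obtain ⟨g, hg𝔫, hg⟩ := Submodule.exists_mem_ne_zero_of_ne_bot h𝔫
  apply Polynomial.eq_zero_of_infinite_isRoot
  apply Set.infinite_of_injective_forall_mem
    (f := fun p : Polynomial Fq =>
      Mc F (Umat F ι (g * p) * γ) 1 0 / jf F (Umat F ι (g * p) * γ) z)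
  · intro p1 p2 hp
    have := tval_inj F ι hι γ hz hp
    exact mul_left_cancel₀ hg this
  · intro p
    exact h (g * p) (Ideal.mul_mem_right _ _ hg𝔫)

lemma eval_assocPoly (ℓ : ℕ) (fam : ℕ → L → L) (z x : L) :
    (assocPoly ℓ fam z).eval x = ∑ i ∈ Finset.range (ℓ + 1), fam i z * x ^ i := by
  simp [assocPoly, Polynomial.eval_finset_sum]

lemma ks_scalar (a b c d x z N J D : L) (hJ : J ≠ 0) (hD : D ≠ 0) (hN : N ≠ 0)
    (hJdef : J = c * z + d) (hDdef : D = a * d - b * c)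
    (hNdef : N = x * (a * z + b) + J) :
    J ^ 2 / D * ((x * a + c) / N - c / J) = x * J / N := by
  rw [div_sub_div _ _ hN hJ, div_mul_div_comm,
    div_eq_div_iff (mul_ne_zero hD (mul_ne_zero hN hJ)) hN]
  subst hNdef
  subst hJdef
  subst hDdef
  ring

lemma pqm (𝔫 : Ideal (Polynomial Fq)) (hι : Function.Injective ι) (h𝔫 : 𝔫 ≠ ⊥)
    (Γ : Subgroup (GL (Fin 2) F))
    (hΓ𝔫 : ∀ γ : GL (Fin 2) F, InGammaN F ι 𝔫 γ → γ ∈ Γ)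
    (k m : ℤ) (ℓ : ℕ) (f : L → L) (fam : ℕ → L → L)
    (hQM : IsQM F (Γ : Set (GL (Fin 2) F)) k m ℓ f fam)
    {γ : GL (Fin 2) F} (hγ : γ ∈ Γ) {z : L} (hz : z ∈ Omega F) :
    pdslash F k m (assocPoly ℓ fam) γ z = assocPoly ℓ fam z := by
  rw [← sub_eq_zero]
  apply poly_zero_of_roots F ι hι h𝔫 γ hz
  intro n hn
  have hu : Umat F ι n ∈ Γ := hΓ𝔫 _ (Umat_inGammaN F ι 𝔫 hn)
  have hw : act F γ z ∈ Omega F := act_mem F γ hz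
  have hjγ := jf_ne_zero F γ hz
  have hju := jf_ne_zero F (Umat F ι n) hw
  have hjuγ := jf_ne_zero F (Umat F ι n * γ) hz
  have hd := detL_ne_zero F γ
  set w := act F γ z with hwdef
  set u := Umat F ι n with hudef
  set t := Mc F (u * γ) 1 0 / jf F (u * γ) z with htdef
  -- key scalar identity
  have hjmul : jf F (u * γ) z = jf F u w * jf F γ z := jf_mul F u γ hz
  have eJJ : jf F u w * jf F γ z =
      iL F ι n * (Mc F γ 0 0 * z + Mc F γ 0 1) + jf F γ z := by
    rw [hudef, hwdef, jf, act, Umat_10, Umat_11, add_mul, one_mul,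
      mul_assoc, div_mul_cancel₀ _ hjγ]
  have hN : iL F ι n * (Mc F γ 0 0 * z + Mc F γ 0 1) + jf F γ z ≠ 0 := by
    rw [← eJJ]
    exact mul_ne_zero hju hjγ
  have e1 : jf F u w =
      (iL F ι n * (Mc F γ 0 0 * z + Mc F γ 0 1) + jf F γ z) / jf F γ z := by
    rw [← eJJ, mul_div_assoc, div_self hjγ, mul_one]
  have hkey : jf F γ z ^ 2 / detL F γ * (t - Mc F γ 1 0 / jf F γ z) =
      iL F ι n / jf F u w := by
    rw [htdef, hjmul, eJJ, Mc_mul, hudef, Umat_10, Umat_11, one_mul, ← hudef, e1,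
      div_div_eq_mul_div]
    exact ks_scalar (Mc F γ 0 0) (Mc F γ 0 1) (Mc F γ 1 0) (Mc F γ 1 1) (iL F ι n) z
      _ _ _ hjγ hd hN rfl (detL_eq F γ) rfl
  have hQMuγ := hQM.2 (u * γ) (mul_mem hu hγ) z hz
  rw [← htdef] at hQMuγ
  rw [slash, detL_mul, act_mul F u γ hz, ← hwdef, hjmul, hudef, Umat_det, one_mul,
    ← hudef] at hQMuγ
  have hQMu := hQM.2 u hu w hw
  rw [slash, hudef, Umat_det, Umat_10, one_zpow, one_mul, ← hudef] at hQMu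
  rw [Polynomial.IsRoot, Polynomial.eval_sub, sub_eq_zero, pdslash,
    Polynomial.eval_mul, Polynomial.eval_C, Polynomial.eval_comp,
    Polynomial.eval_mul, Polynomial.eval_C, Polynomial.eval_sub,
    Polynomial.eval_X, Polynomial.eval_C, hkey, eval_assocPoly, eval_assocPoly,
    ← hwdef, ← hQMuγ, ← hQMu, mul_zpow]
  ring

lemma vanish (𝔫 : Ideal (Polynomial Fq)) (hι : Function.Injective ι) (h𝔫 : 𝔫 ≠ ⊥)
    (Γ : Subgroup (GL (Fin 2) F))
    (hΓ𝔫 : ∀ γ : GL (Fin 2) F, InGammaN F ι 𝔫 γ → γ ∈ Γ)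
    (k m : ℤ) (R : L → Polynomial L)
    (hinv : ∀ γ ∈ Γ, ∀ z ∈ Omega F, pdslash F k m R γ z = R z)
    (hc0 : ∀ z ∈ Omega F, (R z).coeff 0 = 0) :
    ∀ z ∈ Omega F, R z = 0 := by
  intro z hz
  apply poly_zero_of_roots F ι hι h𝔫 1 hz
  intro n hn
  have hu : Umat F ι n ∈ Γ := hΓ𝔫 _ (Umat_inGammaN F ι 𝔫 hn)
  have hiv := hinv (Umat F ι n) hu z hz
  rw [mul_one, Polynomial.IsRoot, ← hiv, pdslash, Polynomial.eval_mul,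
    Polynomial.eval_C, Polynomial.eval_comp, Polynomial.eval_mul,
    Polynomial.eval_C, Polynomial.eval_sub, Polynomial.eval_X, Polynomial.eval_C,
    sub_self, mul_zero, ← Polynomial.coeff_zero_eq_eval_zero,
    hc0 _ (act_mem F _ hz), mul_zero]

lemma pdslash_assoc_coeff (k m : ℤ) (ℓ : ℕ) (fam : ℕ → L → L) (γ : GL (Fin 2) F)
    {z : L} (hz : z ∈ Omega F) {i : ℕ} (hi : i ≤ ℓ) :
    (pdslash F k m (assocPoly ℓ fam) γ z).coeff i =
      dslash F (k - 2 * (i : ℤ)) (m - (i : ℤ)) (ℓ - i) (shiftFam i fam) γ z := by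
  have hJ := jf_ne_zero F γ hz
  have hD := detL_ne_zero F γ
  have hXB : Polynomial.X - Polynomial.C (Mc F γ 1 0 / jf F γ z) =
      Polynomial.X + Polynomial.C (-(Mc F γ 1 0 / jf F γ z)) := by
    rw [map_neg, sub_eq_add_neg]
  rw [pdslash, assocPoly, hXB, Polynomial.coeff_C_mul, Polynomial.sum_comp]
  simp only [Polynomial.mul_comp, Polynomial.C_comp, Polynomial.pow_comp,
    Polynomial.X_comp, mul_pow, ← Polynomial.C_pow, Polynomial.finset_sum_coeff,
    Polynomial.coeff_C_mul, Polynomial.coeff_X_add_C_pow]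
  rw [Finset.mul_sum, dslash]
  rw [show ℓ - i + 1 = ℓ + 1 - i by omega]
  rw [Finset.range_eq_Ico,
    ← Finset.sum_Ico_consecutive _ (Nat.zero_le i) (by omega : i ≤ ℓ + 1)]
  have hlow : ∀ t ∈ Finset.Ico 0 i,
      detL F γ ^ m * jf F γ z ^ (-k) *
        (fam t (act F γ z) * ((jf F γ z ^ 2 / detL F γ) ^ t *
          ((-(Mc F γ 1 0 / jf F γ z)) ^ (t - i) * (t.choose i : L)))) = 0 := by
    intro t ht
    rw [Finset.mem_Ico] at ht
    rw [Nat.choose_eq_zero_of_lt ht.2]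
    ring
  rw [Finset.sum_eq_zero hlow, zero_add, Finset.sum_Ico_eq_sum_range]
  apply Finset.sum_congr rfl
  intro h ht
  rw [shiftFam]
  rw [show i + h - i = h by omega]
  rw [show (i + h).choose i = (h + i).choose i by rw [Nat.add_comm]]
  rw [show i + h = h + i by rw [Nat.add_comm]]
  rw [show m - (i : ℤ) - (h : ℤ) = m - ((h + i : ℕ) : ℤ) by push_cast; ring]
  rw [show 2 * (h : ℤ) - (k - 2 * (i : ℤ)) = -k + ((2 * (h + i) : ℕ) : ℤ) by push_cast; ring]
  rw [zpow_sub₀ hD, zpow_add₀ hJ, zpow_natCast, zpow_natCast]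
  rw [div_pow, neg_div, pow_mul]
  field_simp

lemma assocPoly_coeff (ℓ : ℕ) (fam : ℕ → L → L) (z : L) {i : ℕ} (hi : i ≤ ℓ) :
    (assocPoly ℓ fam z).coeff i = fam i z := by
  rw [assocPoly, Polynomial.finset_sum_coeff]
  simp only [Polynomial.coeff_C_mul, Polynomial.coeff_X_pow, mul_ite, mul_one, mul_zero]
  rw [Finset.sum_ite_eq (Finset.range (ℓ + 1)) i (fun t => fam t z)]
  simp [Nat.lt_succ_iff, hi]

lemma pdslash_congr (k m : ℤ) (P1 P2 : L → Polynomial L) (γ : GL (Fin 2) F) (z : L)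
    (h : P1 (act F γ z) = P2 (act F γ z)) :
    pdslash F k m P1 γ z = pdslash F k m P2 γ z := by
  rw [pdslash, pdslash, h]

lemma pdslash_C_mul (k m : ℤ) (a : L) (P : L → Polynomial L) (γ : GL (Fin 2) F)
    (z : L) :
    pdslash F k m (fun z => Polynomial.C a * P z) γ z =
      Polynomial.C a * pdslash F k m P γ z := by
  simp only [pdslash, Polynomial.mul_comp, Polynomial.C_comp]
  ring

lemma pdslash_sub (k m : ℤ) (P1 P2 : L → Polynomial L) (γ : GL (Fin 2) F) (z : L) :
    pdslash F k m (fun z => P1 z - P2 z) γ z =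
      pdslash F k m P1 γ z - pdslash F k m P2 γ z := by
  simp only [pdslash, Polynomial.sub_comp]
  ring

lemma pdslash_sum {ι : Type*} (k m : ℤ) (s : Finset ι) (G : ι → L → Polynomial L)
    (γ : GL (Fin 2) F) (z : L) :
    pdslash F k m (fun z => ∑ j ∈ s, G j z) γ z =
      ∑ j ∈ s, pdslash F k m (G j) γ z := by
  simp only [pdslash, Polynomial.sum_comp, Finset.mul_sum]

lemma dslash_shiftFam_zero (k m : ℤ) (ℓ : ℕ) (fam : ℕ → L → L) (γ : GL (Fin 2) F)
    (z : L) :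
    dslash F k m ℓ (shiftFam 0 fam) γ z = dslash F k m ℓ fam γ z := by
  simp [dslash, shiftFam]

lemma exists_perm (Γ : Subgroup (GL (Fin 2) F)) (η : GL (Fin 2) F) (r : ℕ)
    (γs : Fin r → GL (Fin 2) F)
    (hcov : (⋃ j, (fun g => g * γs j) '' (Γ : Set (GL (Fin 2) F))) =
      {x | ∃ a ∈ Γ, ∃ b ∈ Γ, x = a * η * b})
    (hdisj : ∀ j j' : Fin r, j ≠ j' →
      Disjoint ((fun g => g * γs j) '' (Γ : Set (GL (Fin 2) F)))
        ((fun g => g * γs j') '' (Γ : Set (GL (Fin 2) F))))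
    {γ : GL (Fin 2) F} (hγ : γ ∈ Γ) :
    ∃ σ : Fin r → Fin r, Function.Bijective σ ∧
      ∀ j, ∃ δ ∈ Γ, γs j * γ = δ * γs (σ j) := by
  have hrep : ∀ j, ∃ (j' : Fin r) (δ : GL (Fin 2) F), δ ∈ Γ ∧ γs j * γ = δ * γs j' := by
    intro j
    have h0 : γs j ∈ (⋃ j, (fun g => g * γs j) '' (Γ : Set (GL (Fin 2) F))) :=
      Set.mem_iUnion.2 ⟨j, ⟨1, Γ.one_mem, one_mul _⟩⟩
    rw [hcov] at h0
    obtain ⟨a, ha, b, hb, habe⟩ := h0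
    have h1 : γs j * γ ∈ (⋃ j, (fun g => g * γs j) '' (Γ : Set (GL (Fin 2) F))) := by
      rw [hcov]
      exact ⟨a, ha, b * γ, Γ.mul_mem hb hγ, by rw [habe, mul_assoc]⟩
    obtain ⟨t, g, hg, hge⟩ := Set.mem_iUnion.1 h1
    exact ⟨t, g, hg, hge.symm⟩
  choose σ δ hδ hEq using hrep
  refine ⟨σ, ?_, fun j => ⟨δ j, hδ j, hEq j⟩⟩
  rw [← Finite.injective_iff_bijective]
  intro j1 j2 hσ
  by_contra hne
  have hd := hdisj j1 j2 hne
  have key : (δ j1 * (δ j2)⁻¹ * γs j2) * γ = γs j1 * γ := by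
    calc (δ j1 * (δ j2)⁻¹ * γs j2) * γ
        = δ j1 * ((δ j2)⁻¹ * (γs j2 * γ)) := by group
      _ = δ j1 * ((δ j2)⁻¹ * (δ j2 * γs (σ j2))) := by rw [hEq j2]
      _ = δ j1 * γs (σ j1) := by rw [hσ]; group
      _ = γs j1 * γ := (hEq j1).symm
  exact Set.disjoint_left.1 hd ⟨1, Γ.one_mem, one_mul _⟩
    ⟨δ j1 * (δ j2)⁻¹, Γ.mul_mem (hδ j1) (Γ.inv_mem (hδ j2)), mul_right_cancel key⟩


end AuxLemmas

/-- Characterization of Hecke eigenforms (Corollary 5.5): `T_η(f) = λf` iff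
`T_η(fᵢ) = λ(det η)^{-i} fᵢ` for all `0 ≤ i ≤ ℓ`. -/
theorem hecke_eigenform_iff
    {L : Type*} [Field L] {Fq : Type*} [Field Fq] [Fintype Fq]
    (F : Subfield L) (ι : Polynomial Fq →+* F) (hι : Function.Injective ι)
    (Γ : Subgroup (GL (Fin 2) F))
    (hΓA : ∀ γ ∈ Γ, InGamma0 F ι ⊤ γ)
    (𝔫 : Ideal (Polynomial Fq)) (h𝔫 : 𝔫 ≠ ⊥)
    (hΓ𝔫 : ∀ γ : GL (Fin 2) F, InGammaN F ι 𝔫 γ → γ ∈ Γ)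
    (η : GL (Fin 2) F) (r : ℕ) (γs : Fin r → GL (Fin 2) F)
    (hcov : (⋃ j, (fun g => g * γs j) '' (Γ : Set (GL (Fin 2) F))) =
      {x | ∃ a ∈ Γ, ∃ b ∈ Γ, x = a * η * b})
    (hdisj : ∀ j j' : Fin r, j ≠ j' →
      Disjoint ((fun g => g * γs j) '' (Γ : Set (GL (Fin 2) F)))
        ((fun g => g * γs j') '' (Γ : Set (GL (Fin 2) F))))
    (k m : ℤ) (ℓ : ℕ) (f : L → L) (fam : ℕ → L → L)
    (hQM : IsQM F (Γ : Set (GL (Fin 2) F)) k m ℓ f fam)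
    (lam : L)
    (Tf : L → L)
    (hTf : ∀ z, Tf z = detL F η ^ (k - m) * ∑ j, dslash F k m ℓ fam (γs j) z)
    (Ti : ℕ → L → L)
    (hTi : ∀ i z, Ti i z = detL F η ^ ((k - 2 * (i : ℤ)) - (m - (i : ℤ))) *
      ∑ j, dslash F (k - 2 * (i : ℤ)) (m - (i : ℤ)) (ℓ - i) (shiftFam i fam) (γs j) z) :
    (∀ z ∈ Omega F, Tf z = lam * f z) ↔
      ∀ i ≤ ℓ, ∀ z ∈ Omega F,
        Ti i z = lam * detL F η ^ (-(i : ℤ)) * fam i z := by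
  have hdet := detL_ne_zero F η
  set P : L → Polynomial L := assocPoly ℓ fam with hPdef
  have hTi0 : ∀ z, Ti 0 z = Tf z := by
    intro z
    rw [hTi, hTf]
    simp only [Nat.cast_zero, mul_zero, sub_zero, Nat.sub_zero]
    congr 1
    apply Finset.sum_congr rfl
    intro j _
    exact dslash_shiftFam_zero F k m ℓ fam (γs j) z
  have hTQcoeff : ∀ i ≤ ℓ, ∀ z ∈ Omega F,
      (Polynomial.C (detL F η ^ (k - m)) * ∑ j, pdslash F k m P (γs j) z).coeff i =
        detL F η ^ (i : ℤ) * Ti i z := by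
    intro i hi z hz
    rw [Polynomial.coeff_C_mul, Polynomial.finset_sum_coeff]
    have : ∀ j : Fin r, (pdslash F k m P (γs j) z).coeff i =
        dslash F (k - 2 * (i : ℤ)) (m - (i : ℤ)) (ℓ - i) (shiftFam i fam) (γs j) z :=
      fun j => pdslash_assoc_coeff F k m ℓ fam (γs j) hz hi
    rw [Finset.sum_congr rfl (fun j _ => this j), hTi,
      show (k - m) = (i : ℤ) + ((k - 2 * (i : ℤ)) - (m - (i : ℤ))) by ring,
      zpow_add₀ hdet, mul_assoc]
  constructor
  · intro h1 i hi z hz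
    set R : L → Polynomial L :=
      fun z => (Polynomial.C (detL F η ^ (k - m)) * ∑ j, pdslash F k m P (γs j) z) -
        Polynomial.C lam * P z with hRdef
    have hP : ∀ δ ∈ Γ, ∀ w ∈ Omega F, pdslash F k m P δ w = P w := by
      intro δ hδ w hw
      exact pqm F ι 𝔫 hι h𝔫 Γ hΓ𝔫 k m ℓ f fam hQM hδ hw
    have hinv : ∀ γ ∈ Γ, ∀ z ∈ Omega F, pdslash F k m R γ z = R z := by
      intro γ hγ z hz
      rw [hRdef]
      rw [pdslash_sub F k m
        (fun z => Polynomial.C (detL F η ^ (k - m)) * ∑ j, pdslash F k m P (γs j) z)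
        (fun z => Polynomial.C lam * P z) γ z]
      rw [pdslash_C_mul F k m (detL F η ^ (k - m))
        (fun z => ∑ j, pdslash F k m P (γs j) z) γ z]
      rw [pdslash_C_mul F k m lam P γ z]
      rw [pdslash_sum F k m Finset.univ (fun j => pdslash F k m P (γs j)) γ z]
      rw [hP γ hγ z hz]
      obtain ⟨σ, hbij, hrep⟩ := exists_perm F Γ η r γs hcov hdisj hγ
      have hterm : ∀ j : Fin r, pdslash F k m (pdslash F k m P (γs j)) γ z =
          pdslash F k m P (γs (σ j)) z := by
        intro j
        rw [← pdslash_mul F k m P (γs j) γ hz]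
        obtain ⟨δ, hδ, heq⟩ := hrep j
        rw [heq, pdslash_mul F k m P δ (γs (σ j)) hz]
        exact pdslash_congr F k m (pdslash F k m P δ) P (γs (σ j)) z
          (hP δ hδ _ (act_mem F (γs (σ j)) hz))
      rw [Finset.sum_congr rfl (fun j _ => hterm j)]
      rw [Fintype.sum_bijective σ hbij (fun j => pdslash F k m P (γs (σ j)) z)
        (fun j => pdslash F k m P (γs j) z) (fun j => rfl)]
    have hPcoeff : ∀ (z : L), ∀ i ≤ ℓ, (P z).coeff i = fam i z := by
      intro z i hi
      rw [hPdef]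
      exact assocPoly_coeff ℓ fam z hi
    have hc0 : ∀ z ∈ Omega F, (R z).coeff 0 = 0 := by
      intro z hz
      have h0 := hTQcoeff 0 (Nat.zero_le ℓ) z hz
      rw [Nat.cast_zero, zpow_zero, one_mul, hTi0] at h0
      simp only [hRdef]
      rw [Polynomial.coeff_sub, h0, Polynomial.coeff_C_mul,
        hPcoeff z 0 (Nat.zero_le ℓ), h1 z hz, hQM.1 hz]
      ring
    have hR0 := vanish F ι 𝔫 hι h𝔫 Γ hΓ𝔫 k m R hinv hc0 z hz
    have hcoeff : (R z).coeff i = 0 := by rw [hR0]; simp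
    simp only [hRdef] at hcoeff
    rw [Polynomial.coeff_sub, hTQcoeff i hi z hz, Polynomial.coeff_C_mul,
      hPcoeff z i hi] at hcoeff
    have hEq : detL F η ^ (i : ℤ) * Ti i z = lam * fam i z := by
      linear_combination hcoeff
    calc Ti i z = detL F η ^ (-(i : ℤ)) * (detL F η ^ (i : ℤ) * Ti i z) := by
          rw [← mul_assoc, ← zpow_add₀ hdet]
          simp
      _ = detL F η ^ (-(i : ℤ)) * (lam * fam i z) := by rw [hEq]
      _ = lam * detL F η ^ (-(i : ℤ)) * fam i z := by ring
  · intro h2 z hz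
    have h0 := h2 0 (Nat.zero_le ℓ) z hz
    rw [hTi0] at h0
    rw [h0, hQM.1 hz]
    simp


end DrinfeldQM
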